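/- Let (X,d) be a bounded metric space with Samuel compactification (S(X), τ, ∂). Let K ⊆ S(X) be a subset such that K with the relative τ-topology is a metrizable topological space. Then the topology induced by ∂ and the topology τ coincide on K; in particular, if K is τ-closed, then (K, ∂) is a compact metric space. -/

import Mathlib

open scoped BoundedContinuousFunction
noncomputable section

variable (X : Type*) [MetricSpace X]

/-- The star subalgebra of bounded *uniformly continuous* complex-valued functions
inside the C*-algebra of bounded continuous functions. -/
def UCB : StarSubalgebra ℂ (X →ᵇ ℂ) where
  carrier := {f | UniformContinuous ⇑f}
  mul_mem' := by
    intro a b ha hb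
    simp only [Set.mem_setOf_eq] at *
    have hbd : Bornology.IsBounded (Set.range fun x => ((a x : ℂ), (b x : ℂ))) := by
      refine Bornology.IsBounded.subset ((a.isBounded_range).prod (b.isBounded_range)) ?_
      rintro p ⟨x, rfl⟩
      exact ⟨⟨x, rfl⟩, ⟨x, rfl⟩⟩
    set K := closure (Set.range fun x => ((a x : ℂ), (b x : ℂ))) with hK
    have hKc : IsCompact K := hbd.isCompact_closure
    haveI : CompactSpace K := isCompact_iff_compactSpace.mp hKc
    have hmul : UniformContinuous fun p : K => (p : ℂ × ℂ).1 * (p : ℂ × ℂ).2 :=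
      CompactSpace.uniformContinuous_of_continuous
        ((continuous_fst.comp continuous_subtype_val).mul
          (continuous_snd.comp continuous_subtype_val))
    have hF : UniformContinuous fun x : X => (⟨(a x, b x), subset_closure ⟨x, rfl⟩⟩ : K) :=
      (ha.prodMk hb).subtype_mk _
    have : UniformContinuous fun x : X => a x * b x := hmul.comp hF
    exact this
  one_mem' := by
    exact (uniformContinuous_const : UniformContinuous fun _ : X => (1 : ℂ))
  add_mem' := by
    intro a b ha hb
    simp only [Set.mem_setOf_eq] at *
    exact ha.add hb
  zero_mem' := by
    exact (uniformContinuous_const : UniformContinuous fun _ : X => (0 : ℂ))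
  algebraMap_mem' := by
    intro c
    have : ⇑(algebraMap ℂ (X →ᵇ ℂ) c) = fun _ : X => c := by
      ext x; simp [Algebra.algebraMap_eq_smul_one]
    simp only [Set.mem_setOf_eq, this]
    exact uniformContinuous_const
  star_mem' := by
    intro a ha
    simp only [Set.mem_setOf_eq] at *
    have : UniformContinuous fun x : X => (starRingEnd ℂ) (a x) :=
      (Complex.isometry_conj.uniformContinuous).comp ha
    exact this

/-- The Samuel compactification of a metric space `X`: the character space (Gelfand spectrum)
of the algebra of bounded uniformly continuous functions, with the weak* topology. -/
def Samuel : Type _ := WeakDual.characterSpace ℂ (UCB X)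

instance : TopologicalSpace (Samuel X) := by unfold Samuel; infer_instance

instance : FunLike (Samuel X) (UCB X) ℂ := by unfold Samuel; infer_instance

/-- Evaluation at a point of `X`, as a continuous linear functional on `UCB X`. -/
def samuelEvalCLM (x : X) : WeakDual ℂ (UCB X) :=
  LinearMap.mkContinuous
    { toFun := fun f => (f : X →ᵇ ℂ) x
      map_add' := fun f g => by simp
      map_smul' := fun c f => by simp } 1
    (fun f => by rw [one_mul]; exact BoundedContinuousFunction.norm_coe_le_norm (f : X →ᵇ ℂ) x)

lemma samuelEvalCLM_apply (x : X) (f : UCB X) : samuelEvalCLM X x f = (f : X →ᵇ ℂ) x := rfl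

/-- Evaluation at a point of `X`, as a character of `UCB X`:
this is the canonical embedding of `X` into its Samuel compactification. -/
def samuelEmbed (x : X) : Samuel X :=
  ⟨samuelEvalCLM X x, by
    refine ⟨fun h => ?_, fun f g => ?_⟩
    · have h1 : samuelEvalCLM X x 1 = 0 := by rw [h]; rfl
      have h2 : samuelEvalCLM X x 1 = 1 := rfl
      rw [h1] at h2
      exact zero_ne_one h2
    · simp only [samuelEvalCLM_apply]
      simp⟩

/-- The bounded `1`-Lipschitz real-valued functions on `X`. -/
def Lip1 : Type _ := {f : X →ᵇ ℝ // LipschitzWith 1 ⇑f}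

/-- A bounded `1`-Lipschitz real function, regarded as an element of `UCB X`. -/
def toUCB (f : Lip1 X) : UCB X :=
  ⟨BoundedContinuousFunction.comp Complex.ofReal
      (Complex.isometry_ofReal.lipschitz) f.1,
   by
     have : UniformContinuous fun x : X => (f.1 x : ℂ) :=
       Complex.isometry_ofReal.uniformContinuous.comp f.2.uniformContinuous
     exact this⟩

/-- The topometric distance `∂` on the Samuel compactification:
`∂(a,b) = sup {|a(f) - b(f)| : f : X → ℝ bounded and 1-Lipschitz}`. -/
def samuelDist (a b : Samuel X) : ℝ :=
  ⨆ f : Lip1 X, ‖a (toUCB X f) - b (toUCB X f)‖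

/-- The `∂`-gap between two subsets of the Samuel compactification. -/
def samuelSetDist (A B : Set (Samuel X)) : ℝ :=
  sInf {r | ∃ a ∈ A, ∃ b ∈ B, r = samuelDist X a b}


-- ======================================================================
-- Auxiliary development for the proof
-- ======================================================================

open Filter Topology Metric

namespace SamuelProof

variable {X : Type*} [MetricSpace X]



lemma ucb_uc (g : UCB X) : UniformContinuous ⇑(g : X →ᵇ ℂ) := g.2

instance : AlgHomClass (Samuel X) ℂ (UCB X) ℂ := by unfold Samuel; infer_instance

lemma isClosed_ucb : IsClosed ((UCB X : Set (X →ᵇ ℂ))) := by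
  have : (UCB X : Set (X →ᵇ ℂ)) = {f : X →ᵇ ℂ | UniformContinuous ⇑f} := rfl
  rw [this]
  refine isClosed_of_closure_subset ?_
  intro f hf
  rw [Set.mem_setOf_eq, Metric.uniformContinuous_iff]
  intro ε hε
  obtain ⟨g, hg, hfg⟩ := Metric.mem_closure_iff.mp hf (ε/3) (by linarith)
  obtain ⟨δ, hδ, hgδ⟩ := Metric.uniformContinuous_iff.mp hg (ε/3) (by linarith)
  refine ⟨δ, hδ, fun {x y} hxy => ?_⟩
  have h1 : dist (f x) (g x) ≤ dist f g := BoundedContinuousFunction.dist_coe_le_dist x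
  have h2 : dist (g y) (f y) ≤ dist g f := BoundedContinuousFunction.dist_coe_le_dist y
  have h3 := hgδ hxy
  have h4 : dist g f = dist f g := dist_comm _ _
  calc dist (f x) (f y) ≤ dist (f x) (g x) + dist (g x) (g y) + dist (g y) (f y) :=
        dist_triangle4 _ _ _ _
    _ < ε := by rw [h4] at h2; linarith

instance : CompleteSpace (UCB X) :=
  (isClosed_ucb (X := X)).completeSpace_coe

instance : CompactSpace (Samuel X) := by unfold Samuel; infer_instance

lemma continuous_eval (g : UCB X) : Continuous fun a : Samuel X => a g := by
  have h : Continuous fun φ : WeakDual.characterSpace ℂ (UCB X) => φ g :=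
    (WeakDual.eval_continuous g).comp continuous_subtype_val
  exact h

lemma nonempty_of_char (a : Samuel X) : Nonempty X := by
  by_contra h
  rw [not_nonempty_iff] at h
  have h10 : (1 : UCB X) = 0 := by
    apply Subtype.ext
    apply BoundedContinuousFunction.ext
    intro x
    exact (h.false x).elim
  have h1 : a 1 = 1 := map_one a
  rw [h10, map_zero] at h1
  exact one_ne_zero h1.symm


lemma exists_point_near (a : Samuel X) (t : Finset (UCB X × ℝ)) (ht : ∀ p ∈ t, 0 < p.2) :
    ∃ x : X, ∀ p ∈ t, ‖(p.1 : X →ᵇ ℂ) x - a p.1‖ ≤ p.2 := by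
  haveI hne : Nonempty X := nonempty_of_char a
  by_contra hcon
  push_neg at hcon
  rcases Finset.eq_empty_or_nonempty t with rfl | htne
  · obtain ⟨x⟩ := hne
    obtain ⟨p, hp, -⟩ := hcon x
    exact absurd hp (Finset.notMem_empty p)
  set δ : ℝ := t.inf' htne (fun p => p.2) with hδdef
  have hδpos : 0 < δ := by
    rw [hδdef, Finset.lt_inf'_iff]
    exact ht
  set e : UCB X × ℝ → UCB X := fun p =>
    (p.1 - algebraMap ℂ (UCB X) (a p.1)) * star (p.1 - algebraMap ℂ (UCB X) (a p.1)) with he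
  set h : UCB X := ∑ p ∈ t, e p with hh
  set r : X → ℝ := fun x => ∑ p ∈ t, Complex.normSq ((p.1 : X →ᵇ ℂ) x - a p.1) with hr
  have hval : ∀ x, (h : X →ᵇ ℂ) x = ((r x : ℝ) : ℂ) := by
    intro x
    have hsum : ((h : X →ᵇ ℂ)) x = ∑ p ∈ t, ((e p : X →ᵇ ℂ)) x := by
      rw [hh, AddSubmonoidClass.coe_finset_sum]; simp
    rw [hsum, hr]
    push_cast
    refine Finset.sum_congr rfl fun p hp => ?_
    have hterm : ((e p : X →ᵇ ℂ)) x
        = ((p.1 : X →ᵇ ℂ) x - a p.1) * star ((p.1 : X →ᵇ ℂ) x - a p.1) := by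
      have halg : ((algebraMap ℂ (UCB X) (a p.1) : UCB X) : X →ᵇ ℂ) x = a p.1 := by
        simp [Algebra.algebraMap_eq_smul_one]
      calc ((e p : X →ᵇ ℂ)) x
          = (((p.1 : X →ᵇ ℂ) x - ((algebraMap ℂ (UCB X) (a p.1) : UCB X) : X →ᵇ ℂ) x)) *
            star (((p.1 : X →ᵇ ℂ) x - ((algebraMap ℂ (UCB X) (a p.1) : UCB X) : X →ᵇ ℂ) x)) := rfl
        _ = _ := by rw [halg]
    rw [hterm]
    rw [mul_comm]
    exact (Complex.normSq_eq_conj_mul_self (z := (p.1 : X →ᵇ ℂ) x - a p.1)).symm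
  have hrlb : ∀ x, δ^2 ≤ r x := by
    intro x
    obtain ⟨p, hp, hlt⟩ := hcon x
    have h1 : Complex.normSq ((p.1 : X →ᵇ ℂ) x - a p.1) ≤ r x :=
      Finset.single_le_sum (f := fun q : UCB X × ℝ => Complex.normSq ((q.1 : X →ᵇ ℂ) x - a q.1))
        (fun q _ => Complex.normSq_nonneg _) hp
    have h2 : δ^2 ≤ Complex.normSq ((p.1 : X →ᵇ ℂ) x - a p.1) := by
      rw [← Complex.sq_norm]
      have hδp : δ ≤ p.2 := Finset.inf'_le _ hp
      have : δ ≤ ‖(p.1 : X →ᵇ ℂ) x - a p.1‖ := by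
        have := hlt.le
        linarith
      exact pow_le_pow_left₀ hδpos.le this 2
    linarith
  -- inverse
  set c2 : ℝ := δ^2 with hc2def
  have hc2 : 0 < c2 := by positivity
  set w : ℝ → ℝ := fun s => (max c2 s)⁻¹ with hw
  set L : NNReal := ⟨c2⁻¹ * c2⁻¹, by positivity⟩ with hL
  have hwlip : ∀ s u : ℝ, dist (w s) (w u) ≤ (c2⁻¹ * c2⁻¹) * dist s u := by
    intro s u
    set A := max c2 s with hA
    set B := max c2 u with hB
    have hAp : 0 < A := lt_of_lt_of_le hc2 (le_max_left _ _)
    have hBp : 0 < B := lt_of_lt_of_le hc2 (le_max_left _ _)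
    have hkey : A⁻¹ - B⁻¹ = (B - A) / (A * B) := by field_simp
    have habs : |B - A| ≤ |u - s| := by
      rw [hA, hB]
      have := abs_max_sub_max_le_abs u s c2
      rwa [max_comm u c2, max_comm s c2] at this
    rw [Real.dist_eq, Real.dist_eq, hw]
    simp only []
    rw [hkey, abs_div, abs_mul, abs_of_pos hAp, abs_of_pos hBp]
    have hAB : c2 * c2 ≤ A * B := mul_le_mul (le_max_left _ _) (le_max_left _ _) hc2.le hAp.le
    calc |B - A| / (A * B) ≤ |u - s| / (c2 * c2) :=
          div_le_div₀ (abs_nonneg _) habs (by positivity) hAB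
      _ = (c2⁻¹ * c2⁻¹) * |s - u| := by rw [abs_sub_comm, div_eq_mul_inv, mul_inv]; ring
  set v : ℂ → ℂ := fun z => ((w z.re : ℝ) : ℂ) with hv
  have hvlip : LipschitzWith L v := by
    apply LipschitzWith.of_dist_le_mul
    intro z z'
    have h1 : dist (v z) (v z') = dist (w z.re) (w z'.re) := by
      rw [hv]
      simp only []
      rw [dist_eq_norm, dist_eq_norm, ← Complex.ofReal_sub, Complex.norm_real]
    have h2 : dist z.re z'.re ≤ dist z z' := by
      rw [Real.dist_eq, Complex.dist_eq, ← Complex.sub_re]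
      exact Complex.abs_re_le_norm _
    calc dist (v z) (v z') = dist (w z.re) (w z'.re) := h1
      _ ≤ (c2⁻¹ * c2⁻¹) * dist z.re z'.re := hwlip _ _
      _ ≤ (c2⁻¹ * c2⁻¹) * dist z z' := by
          apply mul_le_mul_of_nonneg_left h2 (by positivity)
      _ = (L : ℝ) * dist z z' := rfl
  set k0 : X →ᵇ ℂ := BoundedContinuousFunction.comp v hvlip (h : X →ᵇ ℂ) with hk0
  have hkmem : k0 ∈ UCB X := by
    have : UniformContinuous (v ∘ ⇑(h : X →ᵇ ℂ)) :=
      hvlip.uniformContinuous.comp (ucb_uc h)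
    exact this
  set k : UCB X := ⟨k0, hkmem⟩ with hk
  have hhk : h * k = 1 := by
    apply Subtype.ext
    apply BoundedContinuousFunction.ext
    intro x
    have hrx : 0 < r x := lt_of_lt_of_le (by positivity) (hrlb x)
    have h1 : ((h * k : UCB X) : X →ᵇ ℂ) x = (h : X →ᵇ ℂ) x * k0 x := rfl
    have h2 : k0 x = v ((h : X →ᵇ ℂ) x) := rfl
    have h3 : v ((h : X →ᵇ ℂ) x) = ((r x)⁻¹ : ℝ) := by
      rw [hval x, hv]
      simp only [Complex.ofReal_re]
      rw [hw]
      simp only []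
      rw [max_eq_right (hrlb x)]
    have h4 : ((1 : UCB X) : X →ᵇ ℂ) x = 1 := rfl
    rw [h1, h2, h3, h4, hval x]
    rw [← Complex.ofReal_mul, mul_inv_cancel₀ hrx.ne', Complex.ofReal_one]
  have hah : a h = 0 := by
    rw [hh, map_sum]
    refine Finset.sum_eq_zero fun p hp => ?_
    rw [he]
    simp only []
    rw [map_mul, map_sub, AlgHomClass.commutes]
    simp
  have := map_mul a h k
  rw [hhk, map_one, hah, zero_mul] at this
  exact one_ne_zero this

def Represents (U : Ultrafilter X) (a : Samuel X) : Prop :=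
  ∀ g : UCB X, Filter.Tendsto (fun x => (g : X →ᵇ ℂ) x) (U : Filter X) (𝓝 (a g))

lemma exists_rep (a : Samuel X) : ∃ U : Ultrafilter X, Represents U a := by
  haveI : Nonempty X := nonempty_of_char a
  set s : Set (Set X) :=
    {S | ∃ g : UCB X, ∃ δ : ℝ, 0 < δ ∧ S = {x | ‖(g : X →ᵇ ℂ) x - a g‖ ≤ δ}} with hs
  have hgen : (Filter.generate s).NeBot := by
    rw [Filter.generate_neBot_iff]
    intro t hts htfin
    classical
    set T := htfin.toFinset with hT
    have hTs : ∀ S ∈ T, S ∈ s := by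
      intro S hS
      exact hts (htfin.mem_toFinset.mp hS)
    choose g δ hδ hSet using fun (S : T) => hTs S.1 S.2
    set P : Finset (UCB X × ℝ) := T.attach.image (fun S => (g S, δ S)) with hP
    have hPpos : ∀ p ∈ P, 0 < p.2 := by
      intro p hp
      obtain ⟨S, -, rfl⟩ := Finset.mem_image.mp hp
      exact hδ S
    obtain ⟨x, hx⟩ := exists_point_near a P hPpos
    refine ⟨x, ?_⟩
    intro S hSt
    have hST : S ∈ T := htfin.mem_toFinset.mpr hSt
    have hmem : (g ⟨S, hST⟩, δ ⟨S, hST⟩) ∈ P :=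
      Finset.mem_image.mpr ⟨⟨S, hST⟩, Finset.mem_attach _ _, rfl⟩
    have h2 := hx _ hmem
    have hEq : S = {x | ‖((g ⟨S, hST⟩ : UCB X) : X →ᵇ ℂ) x - a (g ⟨S, hST⟩)‖ ≤ δ ⟨S, hST⟩} :=
      hSet ⟨S, hST⟩
    rw [hEq]
    exact h2
  obtain ⟨U, hU⟩ := Filter.exists_ultrafilter_le (Filter.generate s)
  refine ⟨U, fun g => ?_⟩
  rw [Metric.tendsto_nhds]
  intro ε hε
  have hSs : {x | ‖(g : X →ᵇ ℂ) x - a g‖ ≤ ε/2} ∈ s := ⟨g, ε/2, by linarith, rfl⟩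
  have hgenmem : {x | ‖(g : X →ᵇ ℂ) x - a g‖ ≤ ε/2} ∈ Filter.generate s :=
    Filter.mem_generate_of_mem hSs
  have hmemU := hU hgenmem
  refine Filter.mem_of_superset hmemU ?_
  intro x hx
  rw [Set.mem_setOf_eq] at hx ⊢
  rw [dist_eq_norm]
  linarith

lemma Represents.eval_eq {U : Ultrafilter X} {a : Samuel X} (hU : Represents U a) {g : UCB X}
    {z : ℂ} (h : {x | (g : X →ᵇ ℂ) x = z} ∈ U) : a g = z := by
  haveI : (U : Filter X).NeBot := U.neBot
  refine tendsto_nhds_unique (hU g) ?_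
  refine Filter.Tendsto.congr' ?_
    (tendsto_const_nhds : Filter.Tendsto (fun _ : X => z) (U : Filter X) (𝓝 z))
  filter_upwards [h] with x hx using hx.symm

lemma Represents.closedBall_mem {U : Ultrafilter X} {a : Samuel X} (hU : Represents U a)
    (g : UCB X) {s : ℝ} (hs : 0 < s) : {x | ‖(g : X →ᵇ ℂ) x - a g‖ ≤ s} ∈ U := by
  have := (hU g).eventually_mem (Metric.closedBall_mem_nhds (a g) hs)
  refine Filter.mem_of_superset this ?_
  intro x hx
  rw [Set.mem_setOf_eq, ← dist_eq_norm]
  exact Metric.mem_closedBall.mp hx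

lemma toUCB_apply (f : Lip1 X) (x : X) :
    ((toUCB X f : UCB X) : X →ᵇ ℂ) x = ((f.1 x : ℝ) : ℂ) := rfl

instance : Nonempty (Lip1 X) :=
  ⟨⟨0, by intro x y; simp⟩⟩

lemma bddAbove_range_lip (hbdd : Bornology.IsBounded (Set.univ : Set X)) (a b : Samuel X) :
    BddAbove (Set.range fun f : Lip1 X => ‖a (toUCB X f) - b (toUCB X f)‖) := by
  obtain ⟨C, hC⟩ := Metric.isBounded_iff.mp hbdd
  obtain ⟨x0⟩ := nonempty_of_char a
  refine ⟨2 * C, ?_⟩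
  rintro - ⟨f, rfl⟩
  have key : ∀ c : Samuel X, ‖c (toUCB X f) - ((f.1 x0 : ℝ) : ℂ)‖ ≤ C := by
    intro c
    obtain ⟨U, hU⟩ := exists_rep c
    have htends := ((hU (toUCB X f)).sub_const ((f.1 x0 : ℝ) : ℂ)).norm
    refine le_of_tendsto htends (Filter.Eventually.of_forall fun x => ?_)
    rw [toUCB_apply, ← Complex.ofReal_sub, Complex.norm_real]
    have hlip : dist (f.1 x) (f.1 x0) ≤ dist x x0 := by
      have := f.2.dist_le_mul x x0
      simpa using this
    have hd : dist x x0 ≤ C := hC (Set.mem_univ x) (Set.mem_univ x0)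
    rw [Real.dist_eq] at hlip
    calc ‖f.1 x - f.1 x0‖ = |f.1 x - f.1 x0| := rfl
      _ ≤ dist x x0 := hlip
      _ ≤ C := hd
  calc ‖a (toUCB X f) - b (toUCB X f)‖
      ≤ ‖a (toUCB X f) - ((f.1 x0 : ℝ) : ℂ)‖ + ‖b (toUCB X f) - ((f.1 x0 : ℝ) : ℂ)‖ := by
        rw [← norm_neg (b (toUCB X f) - _)]
        calc ‖a (toUCB X f) - b (toUCB X f)‖
            = ‖(a (toUCB X f) - ((f.1 x0 : ℝ) : ℂ)) + -(b (toUCB X f) - ((f.1 x0 : ℝ) : ℂ))‖ := by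
              ring_nf
          _ ≤ _ := norm_add_le _ _
    _ ≤ C + C := add_le_add (key a) (key b)
    _ = 2 * C := by ring
  
lemma le_samuelDist (hbdd : Bornology.IsBounded (Set.univ : Set X)) (a b : Samuel X)
    (f : Lip1 X) : ‖a (toUCB X f) - b (toUCB X f)‖ ≤ samuelDist X a b :=
  le_ciSup (bddAbove_range_lip hbdd a b) f

lemma samuelDist_comm (a b : Samuel X) : samuelDist X a b = samuelDist X b a := by
  unfold samuelDist
  exact iSup_congr fun f => norm_sub_rev _ _

/-- `x ↦ min c (infDist x C)` as a bounded 1-Lipschitz function. -/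
def capInf (c : ℝ) (C : Set X) : Lip1 X := by
  refine ⟨⟨⟨fun x => min c (Metric.infDist x C),
    (continuous_const.min (Metric.continuous_infDist_pt C))⟩, ⟨2 * |c|, fun x y => ?_⟩⟩, ?_⟩
  · have hb : ∀ z : X, |min c (Metric.infDist z C)| ≤ |c| := by
      intro z
      rw [abs_le]
      constructor
      · exact le_min (neg_abs_le c) (le_trans (neg_nonpos.mpr (abs_nonneg c)) Metric.infDist_nonneg) |>.trans (min_le_min (le_refl c) (le_refl _)) |>.trans_eq rfl
      · exact le_trans (min_le_left _ _) (le_abs_self c)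
    rw [Real.dist_eq]
    calc |min c (Metric.infDist x C) - min c (Metric.infDist y C)|
        ≤ |min c (Metric.infDist x C)| + |min c (Metric.infDist y C)| := abs_sub _ _
      _ ≤ |c| + |c| := add_le_add (hb x) (hb y)
      _ = 2 * |c| := by ring
  · have h := (LipschitzWith.const (b := c)).min (Metric.lipschitz_infDist_pt C)
    simpa using h

lemma capInf_apply (c : ℝ) (C : Set X) (x : X) :
    (capInf c C).1 x = min c (Metric.infDist x C) := rfl

lemma eq_of_lip1_eq (a c : Samuel X)
    (h : ∀ f : Lip1 X, a (toUCB X f) = c (toUCB X f)) : a = c := by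
  obtain ⟨U, hU⟩ := exists_rep a
  obtain ⟨V, hV⟩ := exists_rep c
  apply DFunLike.ext
  intro g
  by_contra hne
  set δ : ℝ := ‖a g - c g‖ / 3 with hδdef
  have hδpos : 0 < δ := by
    have h1 : a g - c g ≠ 0 := sub_ne_zero.mpr hne
    have h2 : 0 < ‖a g - c g‖ := norm_pos_iff.mpr h1
    rw [hδdef]; linarith
  obtain ⟨η, hηpos, hgη⟩ := Metric.uniformContinuous_iff.mp (ucb_uc g) δ hδpos
  set A : Set X := {x | ‖(g : X →ᵇ ℂ) x - a g‖ ≤ δ} with hAdef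
  have hA : A ∈ U := hU.closedBall_mem g hδpos
  have hAne : A.Nonempty := Ultrafilter.nonempty_of_mem hA
  set C : Set X := {x | ‖(g : X →ᵇ ℂ) x - c g‖ ≤ δ} with hCdef
  have hC : C ∈ V := hV.closedBall_mem g hδpos
  have hsep : ∀ x ∈ A, ∀ y ∈ C, η ≤ dist y x := by
    intro x hx y hy
    by_contra hlt
    push_neg at hlt
    have h1 := hgη hlt
    rw [Set.mem_setOf_eq] at hx hy
    rw [dist_eq_norm] at h1
    have h2 : ‖a g - c g‖ ≤ ‖(g : X →ᵇ ℂ) x - a g‖ + ‖(g : X →ᵇ ℂ) y - (g : X →ᵇ ℂ) x‖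
        + ‖(g : X →ᵇ ℂ) y - c g‖ := by
      have : a g - c g = -((g : X →ᵇ ℂ) x - a g) + ((g : X →ᵇ ℂ) x - (g : X →ᵇ ℂ) y)
          + ((g : X →ᵇ ℂ) y - c g) := by ring
      rw [this]
      calc ‖_ + _ + _‖ ≤ ‖-((g : X →ᵇ ℂ) x - a g) + ((g : X →ᵇ ℂ) x - (g : X →ᵇ ℂ) y)‖
            + ‖(g : X →ᵇ ℂ) y - c g‖ := norm_add_le _ _
        _ ≤ _ := by
            have := norm_add_le (-((g : X →ᵇ ℂ) x - a g)) ((g : X →ᵇ ℂ) x - (g : X →ᵇ ℂ) y)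
            rw [norm_neg] at this
            rw [norm_sub_rev ((g : X →ᵇ ℂ) x) ((g : X →ᵇ ℂ) y)] at this
            linarith
    rw [hδdef] at *
    linarith
  set f : Lip1 X := capInf η A with hf
  have hval : ∀ x : X, ((toUCB X f : UCB X) : X →ᵇ ℂ) x
      = ((min η (Metric.infDist x A) : ℝ) : ℂ) := fun x => by
    rw [toUCB_apply, hf, capInf_apply]
  have haQ : a (toUCB X f) = ((0 : ℝ) : ℂ) := by
    refine hU.eval_eq (Filter.mem_of_superset hA ?_)
    intro x hx
    rw [Set.mem_setOf_eq, hval x]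
    norm_cast
    rw [Metric.infDist_zero_of_mem hx]
    exact min_eq_right hηpos.le
  have hcQ : c (toUCB X f) = ((η : ℝ) : ℂ) := by
    refine hV.eval_eq (Filter.mem_of_superset hC ?_)
    intro y hy
    rw [Set.mem_setOf_eq, hval y]
    norm_cast
    have hinf : η ≤ Metric.infDist y A := by
      by_contra hltinf
      push_neg at hltinf
      obtain ⟨x, hxA, hdlt⟩ := (Metric.infDist_lt_iff hAne).mp hltinf
      exact absurd hdlt (not_lt.mpr (hsep x hxA y hy))
    exact min_eq_left hinf
  rw [h f, hcQ] at haQ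
  norm_cast at haQ
  exact hηpos.ne' haQ

lemma cluster_eq (hbdd : Bornology.IsBounded (Set.univ : Set X)) {a : Samuel X}
    {b : ℕ → Samuel X} {cpt : Samuel X} (hcl : MapClusterPt cpt atTop b)
    (hd : ∀ δ > 0, ∀ᶠ n in atTop, samuelDist X a (b n) < δ) : cpt = a := by
  apply eq_of_lip1_eq
  intro f
  have key : ∀ δ : ℝ, 0 < δ → ‖cpt (toUCB X f) - a (toUCB X f)‖ < 2 * δ := by
    intro δ hδ
    have E1 : ∀ᶠ n in atTop, ‖a (toUCB X f) - (b n) (toUCB X f)‖ < δ := by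
      filter_upwards [hd δ hδ] with n hn
      exact lt_of_le_of_lt (le_samuelDist hbdd a (b n) f) hn
    have hcl2 : MapClusterPt (cpt (toUCB X f)) atTop (fun n => (b n) (toUCB X f)) := by
      have := hcl.continuousAt_comp (f := fun y : Samuel X => y (toUCB X f))
        ((continuous_eval (toUCB X f)).continuousAt)
      exact this
    have E2 : ∃ᶠ n in atTop, (b n) (toUCB X f) ∈ Metric.ball (cpt (toUCB X f)) δ :=
      mapClusterPt_iff_frequently.mp hcl2 _ (Metric.ball_mem_nhds _ hδ)
    obtain ⟨n, hn1, hn2⟩ := (E2.and_eventually E1).exists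
    rw [Metric.mem_ball, dist_eq_norm] at hn1
    calc ‖cpt (toUCB X f) - a (toUCB X f)‖
        ≤ ‖cpt (toUCB X f) - (b n) (toUCB X f)‖ + ‖(b n) (toUCB X f) - a (toUCB X f)‖ := by
          have : cpt (toUCB X f) - a (toUCB X f) = (cpt (toUCB X f) - (b n) (toUCB X f))
              + ((b n) (toUCB X f) - a (toUCB X f)) := by ring
          rw [this]; exact norm_add_le _ _
      _ < δ + δ := by
          have ha1 : ‖cpt (toUCB X f) - (b n) (toUCB X f)‖ < δ := by
            rw [norm_sub_rev]; exact hn1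
          have ha2 : ‖(b n) (toUCB X f) - a (toUCB X f)‖ < δ := by
            rw [norm_sub_rev]; exact hn2
          exact add_lt_add ha1 ha2
      _ = 2 * δ := by ring
  by_contra hne
  have hpos : 0 < ‖cpt (toUCB X f) - a (toUCB X f)‖ :=
    norm_pos_iff.mpr (sub_ne_zero.mpr hne)
  have := key (‖cpt (toUCB X f) - a (toUCB X f)‖ / 3) (by linarith)
  linarith

lemma main_lemma {b : ℕ → Samuel X} {a : Samuel X}
    (hconv : Filter.Tendsto b Filter.atTop (𝓝 a)) {ε : ℝ} (hε : 0 < ε) :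
    ∀ᶠ m in Filter.atTop, samuelDist X (b m) a < ε := by
  by_contra hcon
  rw [Filter.not_eventually] at hcon
  obtain ⟨ψ, hψmono, hψ⟩ := Filter.extraction_of_frequently_atTop hcon
  set c : ℕ → Samuel X := b ∘ ψ with hc
  have hconv' : Filter.Tendsto c Filter.atTop (𝓝 a) := hconv.comp hψmono.tendsto_atTop
  have hsd : ∀ k, ε ≤ samuelDist X (c k) a := fun k => not_lt.mp (hψ k)
  have hch : ∀ k, ∃ f : Lip1 X, ε/2 < ‖(c k) (toUCB X f) - a (toUCB X f)‖ := by
    intro k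
    have h1 : ε/2 < samuelDist X (c k) a := lt_of_lt_of_le (by linarith) (hsd k)
    exact exists_lt_of_lt_ciSup h1
  choose f hf using hch
  choose U hU using fun k => exists_rep (c k)
  obtain ⟨W, hW⟩ := exists_rep a
  set F : ℕ → UCB X := fun k => toUCB X (f k) with hF
  set α : ℕ → ℂ := fun k => a (F k) with hα
  set β : ℕ → ℂ := fun k => (c k) (F k) with hβ
  -- separated large sets
  set A : ℕ → Set X := fun k => {x | ‖(F k : X →ᵇ ℂ) x - β k‖ ≤ ε/8} with hA
  set C : ℕ → Set X := fun k => {x | ‖(F k : X →ᵇ ℂ) x - α k‖ ≤ ε/8} with hC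
  have hAU : ∀ k, A k ∈ U k := fun k => (hU k).closedBall_mem (F k) (by linarith)
  have hCW : ∀ k, C k ∈ W := fun k => hW.closedBall_mem (F k) (by linarith)
  have hCne : ∀ k, (C k).Nonempty := fun k => Ultrafilter.nonempty_of_mem (hCW k)
  have hsep : ∀ k, ∀ x ∈ A k, ∀ y ∈ C k, ε/4 ≤ dist x y := by
    intro k x hx y hy
    rw [hA, Set.mem_setOf_eq] at hx
    rw [hC, Set.mem_setOf_eq] at hy
    have hval : ‖(F k : X →ᵇ ℂ) x - (F k : X →ᵇ ℂ) y‖ ≤ dist x y := by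
      rw [hF, toUCB_apply, toUCB_apply, ← Complex.ofReal_sub, Complex.norm_real]
      have := (f k).2.dist_le_mul x y
      rw [Real.dist_eq] at this
      simpa using this
    have htri : ‖β k - α k‖ ≤ ‖(F k : X →ᵇ ℂ) x - β k‖
        + ‖(F k : X →ᵇ ℂ) x - (F k : X →ᵇ ℂ) y‖ + ‖(F k : X →ᵇ ℂ) y - α k‖ := by
      have hid : β k - α k = -((F k : X →ᵇ ℂ) x - β k)
          + ((F k : X →ᵇ ℂ) x - (F k : X →ᵇ ℂ) y) + ((F k : X →ᵇ ℂ) y - α k) := by ring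
      rw [hid]
      calc ‖_ + _ + _‖ ≤ ‖-((F k : X →ᵇ ℂ) x - β k) + ((F k : X →ᵇ ℂ) x - (F k : X →ᵇ ℂ) y)‖
            + ‖(F k : X →ᵇ ℂ) y - α k‖ := norm_add_le _ _
        _ ≤ _ := by
            have h2 := norm_add_le (-((F k : X →ᵇ ℂ) x - β k))
              ((F k : X →ᵇ ℂ) x - (F k : X →ᵇ ℂ) y)
            rw [norm_neg] at h2
            linarith
    have hβα : ε/2 < ‖β k - α k‖ := hf k
    linarith
  -- the functions used to lock in the recursion
  set Q : ℕ → UCB X := fun k => toUCB X (capInf (ε/4) (C k)) with hQ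
  have hQval : ∀ k x, ((Q k : UCB X) : X →ᵇ ℂ) x
      = ((min (ε/4) (Metric.infDist x (C k)) : ℝ) : ℂ) := fun k x => by
    rw [hQ]; rw [toUCB_apply, capInf_apply]
  have haQ : ∀ k, a (Q k) = 0 := by
    intro k
    have h0 : a (Q k) = ((0 : ℝ) : ℂ) := by
      refine hW.eval_eq (Filter.mem_of_superset (hCW k) ?_)
      intro x hx
      rw [Set.mem_setOf_eq, hQval k x]
      norm_cast
      rw [Metric.infDist_zero_of_mem hx]
      exact min_eq_right (by linarith)
    simpa using h0
  have htendsQ : ∀ k, Filter.Tendsto (fun m => ‖(c m) (Q k)‖) Filter.atTop (𝓝 0) := by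
    intro k
    have h1 : Filter.Tendsto (fun m => (c m) (Q k)) Filter.atTop (𝓝 (a (Q k))) :=
      ((continuous_eval (Q k)).tendsto a).comp hconv'
    rw [haQ k] at h1
    simpa using h1.norm
  have hT : ∀ k, ∃ N : ℕ, ∀ m ≥ N, ‖(c m) (Q k)‖ < ε/16 := by
    intro k
    have := (htendsQ k).eventually (eventually_lt_nhds (by linarith : (0:ℝ) < ε/16))
    exact Filter.eventually_atTop.mp this
  choose T hTspec using hT
  -- the recursively defined subsequence
  set n : ℕ → ℕ := fun j => Nat.rec 0 (fun _ nj => max (nj + 1) ((Finset.range (nj + 1)).sup T)) j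
    with hn
  have hnsucc : ∀ j, n (j + 1) = max (n j + 1) ((Finset.range (n j + 1)).sup T) := fun j => rfl
  have hnmono : StrictMono n := strictMono_nat_of_lt_succ fun j => by
    rw [hnsucc]
    exact lt_of_lt_of_le (Nat.lt_succ_self _) (le_max_left _ _)
  have hkey : ∀ i j, i < j → ‖(c (n j)) (Q (n i))‖ < ε/16 := by
    intro i j hij
    obtain ⟨j', rfl⟩ : ∃ j', j = j' + 1 := ⟨j - 1, by omega⟩
    have hni : n i ≤ n j' := hnmono.monotone (by omega)
    have h1 : T (n i) ≤ (Finset.range (n j' + 1)).sup T :=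
      Finset.le_sup (Finset.mem_range.mpr (by omega))
    have h2 : T (n i) ≤ n (j' + 1) := by
      rw [hnsucc j']
      exact le_trans h1 (le_max_right _ _)
    exact hTspec (n i) (n (j' + 1)) h2
  -- the separated sets
  set D : ℕ → Set X := fun j => A (n j) ∩ ⋂ i ∈ Finset.range j,
    {x | Metric.infDist x (C (n i)) < ε/8} with hD
  have hDU : ∀ j, D j ∈ U (n j) := by
    intro j
    refine Filter.inter_mem (hAU (n j)) ?_
    refine (Filter.biInter_mem (Finset.finite_toSet (Finset.range j))).mpr ?_
    intro i hi
    rw [Finset.mem_coe, Finset.mem_range] at hi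
    have hnorm := hkey i j hi
    set L := (c (n j)) (Q (n i)) with hL
    have hball : {x | ‖((Q (n i) : UCB X) : X →ᵇ ℂ) x - L‖ ≤ ε/16} ∈ U (n j) :=
      (hU (n j)).closedBall_mem (Q (n i)) (by linarith)
    refine Filter.mem_of_superset hball ?_
    intro x hx
    rw [Set.mem_setOf_eq] at hx ⊢
    have hv : ‖((Q (n i) : UCB X) : X →ᵇ ℂ) x‖ < ε/8 := by
      have h3 := norm_add_le (((Q (n i) : UCB X) : X →ᵇ ℂ) x - L) L
      rw [sub_add_cancel] at h3
      have hLn : ‖L‖ < ε/16 := hnorm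
      linarith
    rw [hQval] at hv
    rw [Complex.norm_real] at hv
    have hmin : min (ε/4) (Metric.infDist x (C (n i))) < ε/8 := by
      have h0 : (0:ℝ) ≤ min (ε/4) (Metric.infDist x (C (n i))) :=
        le_min (by linarith) Metric.infDist_nonneg
      calc min (ε/4) (Metric.infDist x (C (n i)))
          = ‖min (ε/4) (Metric.infDist x (C (n i)))‖ := (Real.norm_of_nonneg h0).symm
        _ < ε/8 := hv
    rcases min_lt_iff.mp hmin with h | h
    · linarith
    · exact h
  have hDne : ∀ j, (D j).Nonempty := fun j => Ultrafilter.nonempty_of_mem (hDU j)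
  have hsepD : ∀ i j, i ≠ j → ∀ x ∈ D i, ∀ y ∈ D j, ε/16 ≤ dist x y := by
    have hkey2 : ∀ i j, i < j → ∀ x ∈ D i, ∀ y ∈ D j, ε/16 ≤ dist x y := by
      intro i j hij x hx y hy
      have hxA : x ∈ A (n i) := hx.1
      have hyC : Metric.infDist y (C (n i)) < ε/8 := by
        have := hy.2
        rw [Set.mem_iInter₂] at this
        exact this i (Finset.mem_range.mpr hij)
      obtain ⟨z, hzC, hdz⟩ := (Metric.infDist_lt_iff (hCne (n i))).mp
        (lt_of_lt_of_le hyC (by linarith : ε/8 ≤ 3*ε/16))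
      have h1 : ε/4 ≤ dist x z := hsep (n i) x hxA z hzC
      have h2 : dist x z ≤ dist x y + dist y z := dist_triangle _ _ _
      linarith
    intro i j hij x hx y hy
    rcases lt_or_gt_of_ne hij with h | h
    · exact hkey2 i j h x hx y hy
    · rw [dist_comm]
      exact hkey2 j i h y hy x hx
  -- the final function
  set E : Set X := ⋃ i : ℕ, D (2 * i) with hE
  have hEne : E.Nonempty := by
    obtain ⟨x, hx⟩ := hDne 0
    exact ⟨x, Set.mem_iUnion.mpr ⟨0, by simpa using hx⟩⟩
  set G : UCB X := toUCB X (capInf (ε/16) E) with hG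
  have hGval : ∀ x, ((G : UCB X) : X →ᵇ ℂ) x
      = ((min (ε/16) (Metric.infDist x E) : ℝ) : ℂ) := fun x => by
    rw [hG]; rw [toUCB_apply, capInf_apply]
  have heval0 : ∀ i, (c (n (2 * i))) G = ((0:ℝ):ℂ) := by
    intro i
    refine (hU (n (2 * i))).eval_eq (Filter.mem_of_superset (hDU (2 * i)) ?_)
    intro x hx
    rw [Set.mem_setOf_eq, hGval x]
    norm_cast
    have hxE : x ∈ E := Set.mem_iUnion.mpr ⟨i, hx⟩
    rw [Metric.infDist_zero_of_mem hxE]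
    exact min_eq_right (by linarith)
  have hevalσ : ∀ i, (c (n (2 * i + 1))) G = ((ε/16 : ℝ):ℂ) := by
    intro i
    refine (hU (n (2 * i + 1))).eval_eq (Filter.mem_of_superset (hDU (2 * i + 1)) ?_)
    intro x hx
    rw [Set.mem_setOf_eq, hGval x]
    norm_cast
    have hinf : ε/16 ≤ Metric.infDist x E := by
      by_contra hlt
      push_neg at hlt
      obtain ⟨y, hyE, hdy⟩ := (Metric.infDist_lt_iff hEne).mp hlt
      obtain ⟨i', hy⟩ := Set.mem_iUnion.mp hyE
      have hne2 : 2 * i + 1 ≠ 2 * i' := by omega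
      have := hsepD (2 * i + 1) (2 * i') hne2 x hx y hy
      linarith
    exact min_eq_left hinf
  have htendsG : Filter.Tendsto (fun m => (c m) G) Filter.atTop (𝓝 (a G)) :=
    ((continuous_eval G).tendsto a).comp hconv'
  have hmono2 : StrictMono (fun i : ℕ => 2 * i) := strictMono_nat_of_lt_succ fun i => by omega
  have hmono2' : StrictMono (fun i : ℕ => 2 * i + 1) := strictMono_nat_of_lt_succ fun i => by omega
  have hsub0 : Filter.Tendsto (fun i => (c (n (2 * i))) G) Filter.atTop (𝓝 (a G)) :=
    htendsG.comp (hnmono.comp hmono2).tendsto_atTop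
  have hsubσ : Filter.Tendsto (fun i => (c (n (2 * i + 1))) G) Filter.atTop (𝓝 (a G)) :=
    htendsG.comp (hnmono.comp hmono2').tendsto_atTop
  have hz : a G = ((0:ℝ):ℂ) :=
    tendsto_nhds_unique (hsub0.congr (fun i => heval0 i)) tendsto_const_nhds
  have hσ : a G = ((ε/16 : ℝ):ℂ) :=
    tendsto_nhds_unique (hsubσ.congr (fun i => hevalσ i)) tendsto_const_nhds
  rw [hz] at hσ
  norm_cast at hσ
  linarith

end SamuelProof

open Filter Topology Metric SamuelProof

/-- **Metrizable subspaces of the Samuel compactification.**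
Let `(X,d)` be a bounded metric space whose Samuel compactification `S(X)` carries the weak*
topology `τ` and the topometric distance `∂`. If `K ⊆ S(X)` is metrizable in the relative
`τ`-topology, then the `∂`-topology and `τ` coincide on `K`: a subset of `K` is relatively
`τ`-open iff it is `∂`-open in `K`. In particular, if `K` is `τ`-closed, then `(K, ∂)` is
compact: every sequence in `K` has a subsequence `∂`-converging to a point of `K`. -/
theorem samuel_metrizable_subset (hbdd : Bornology.IsBounded (Set.univ : Set X))
    (K : Set (Samuel X)) (hK : TopologicalSpace.MetrizableSpace K) :
    (∀ S : Set (Samuel X), S ⊆ K →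
        ((∃ T : Set (Samuel X), IsOpen T ∧ S = T ∩ K) ↔
          ∀ a ∈ S, ∃ ε > 0, ∀ b ∈ K, samuelDist X a b < ε → b ∈ S)) ∧
      (IsClosed K →
        ∀ u : ℕ → Samuel X, (∀ n, u n ∈ K) →
          ∃ x ∈ K, ∃ φ : ℕ → ℕ, StrictMono φ ∧
            ∀ ε > 0, ∀ᶠ n in Filter.atTop, samuelDist X (u (φ n)) x < ε) := by
  constructor
  · intro S hSK
    constructor
    · rintro ⟨T, hTopen, rfl⟩ a haS
      by_contra hno
      push_neg at hno
      have hsel : ∀ m : ℕ, ∃ b : Samuel X,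
          b ∈ K ∧ samuelDist X a b < 1/((m:ℝ)+1) ∧ b ∉ T ∩ K := by
        intro m
        obtain ⟨b, hbK, hbd, hbS⟩ := hno (1/((m:ℝ)+1)) (by positivity)
        exact ⟨b, hbK, hbd, hbS⟩
      choose v hvK hvd hvS using hsel
      have hvT : ∀ m, v m ∈ Tᶜ := by
        intro m hvTm
        exact hvS m ⟨hvTm, hvK m⟩
      have hd : ∀ δ : ℝ, δ > 0 → ∀ᶠ m in Filter.atTop, samuelDist X a (v m) < δ := by
        intro δ hδ
        have h1 : Filter.Tendsto (fun m : ℕ => 1/((m:ℝ)+1)) Filter.atTop (𝓝 0) :=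
          tendsto_one_div_add_atTop_nhds_zero_nat
        filter_upwards [h1.eventually (eventually_lt_nhds hδ)] with m hm
        exact lt_trans (hvd m) hm
      haveI : (Filter.map v Filter.atTop).NeBot := Filter.NeBot.map atTop_neBot v
      obtain ⟨cpt, hcpt⟩ := exists_clusterPt_of_compactSpace (Filter.map v Filter.atTop)
      have hMC : MapClusterPt cpt Filter.atTop v := hcpt
      have heq : cpt = a := cluster_eq hbdd hMC hd
      have hclosed : IsClosed Tᶜ := hTopen.isClosed_compl
      have hle : Filter.map v Filter.atTop ≤ Filter.principal Tᶜ :=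
        Filter.le_principal_iff.mpr (Filter.mem_map.mpr (Filter.Eventually.of_forall hvT))
      have hmem : cpt ∈ Tᶜ := by
        have h2 : ClusterPt cpt (Filter.principal Tᶜ) := hcpt.mono hle
        rw [← mem_closure_iff_clusterPt] at h2
        rwa [hclosed.closure_eq] at h2
      rw [heq] at hmem
      exact hmem haS.1
    · intro hRHS
      haveI := hK
      set S' : Set K := Subtype.val ⁻¹' S with hS'
      have hS'open : IsOpen S' := by
        rw [isOpen_iff_mem_nhds]
        intro p hp
        by_contra hnn
        obtain ⟨B, hB⟩ := (𝓝 p).exists_antitone_basis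
        have hnot : ∀ i : ℕ, ∃ q, q ∈ B i ∧ q ∉ S' := by
          intro i
          by_contra hq
          push_neg at hq
          exact hnn (Filter.mem_of_superset (hB.mem i) fun q hqB => hq q hqB)
        choose w hwB hwS using hnot
        have hwconv : Filter.Tendsto w Filter.atTop (𝓝 p) := hB.tendsto hwB
        have hconvS : Filter.Tendsto (fun i => (w i : Samuel X)) Filter.atTop
            (𝓝 (p : Samuel X)) := (continuous_subtype_val.tendsto p).comp hwconv
        obtain ⟨ε, hε, hball⟩ := hRHS (p : Samuel X) hp
        obtain ⟨i, hi⟩ := (main_lemma hconvS hε).exists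
        have hdist : samuelDist X (p : Samuel X) ((w i : Samuel X)) < ε := by
          rwa [samuelDist_comm]
        exact hwS i (hball _ (w i).2 hdist)
      rw [isOpen_induced_iff] at hS'open
      obtain ⟨T, hTopen, hTpre⟩ := hS'open
      refine ⟨T, hTopen, ?_⟩
      ext x
      constructor
      · intro hx
        have hxK : x ∈ K := hSK hx
        have : (⟨x, hxK⟩ : K) ∈ S' := hx
        rw [← hTpre] at this
        exact ⟨this, hxK⟩
      · rintro ⟨hxT, hxK⟩
        have : (⟨x, hxK⟩ : K) ∈ Subtype.val ⁻¹' T := hxT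
        rw [hTpre] at this
        exact this
  · intro hKclosed u hu
    have hKc : IsCompact K := hKclosed.isCompact
    haveI : CompactSpace K := isCompact_iff_compactSpace.mp hKc
    haveI := hK
    set v : ℕ → K := fun m => ⟨u m, hu m⟩ with hv
    obtain ⟨x', -, φ, hφ, hconv⟩ := isCompact_univ.tendsto_subseq fun m => Set.mem_univ (v m)
    refine ⟨(x' : Samuel X), x'.2, φ, hφ, ?_⟩
    intro ε hε
    have hconvS : Filter.Tendsto (fun m => u (φ m)) Filter.atTop (𝓝 (x' : Samuel X)) :=
      (continuous_subtype_val.tendsto x').comp hconv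
    exact main_lemma hconvS hε
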